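/- For community sizes d_1 > d_2 ≥ ... ≥ d_b ≥ 2, define H^c(D) = max_{i∈[2:b]} i·Δ_i^{−2}/d_i with Δ_i = 1/d_i − 1/d_1, and H(D) = max_{i∈[2:b]} i/(log d_1 − log d_i). Then H^c(D) > (d_1·d_b/(d_1 − d_b)) · H(D). -/

import Mathlib

/-- For community sizes `d 1 > d 2 ≥ ... ≥ d b ≥ 2`, with
`H^c(D) = max_{i∈[2:b]} i·Δᵢ⁻²/dᵢ` where `Δᵢ = 1/dᵢ − 1/d₁`, and
`H(D) = max_{i∈[2:b]} i/(log d₁ − log dᵢ)`, we have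
`H^c(D) > (d₁·d_b/(d₁−d_b))·H(D)`. -/
theorem stmt12 (b : ℕ) (hb : 2 ≤ b) (d : ℕ → ℕ)
    (h12 : d 2 < d 1)
    (hmono : ∀ i ∈ Finset.Icc 2 b, ∀ j ∈ Finset.Icc 2 b, i ≤ j → d j ≤ d i)
    (hpos : 2 ≤ d b)
    (Hc H : ℝ)
    (hHc : Hc = (Finset.Icc 2 b).sup' (Finset.nonempty_Icc.mpr hb)
        (fun i => (i : ℝ) * ((1 / (d i : ℝ) - 1 / (d 1 : ℝ)) ^ 2)⁻¹ / (d i : ℝ)))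
    (hH : H = (Finset.Icc 2 b).sup' (Finset.nonempty_Icc.mpr hb)
        (fun i => (i : ℝ) / (Real.log (d 1) - Real.log (d i)))) :
    Hc > ((d 1 : ℝ) * (d b : ℝ) / ((d 1 : ℝ) - (d b : ℝ))) * H := by
  have h2mem : (2 : ℕ) ∈ Finset.Icc 2 b := Finset.mem_Icc.mpr ⟨le_refl 2, hb⟩
  have hbmem : b ∈ Finset.Icc 2 b := Finset.mem_Icc.mpr ⟨hb, le_refl b⟩
  obtain ⟨i, hi, hHi⟩ := Finset.exists_mem_eq_sup' (Finset.nonempty_Icc.mpr hb)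
      (fun i => (i : ℝ) / (Real.log (d 1) - Real.log (d i)))
  obtain ⟨hi2, hib⟩ := Finset.mem_Icc.mp hi
  have hdbdi : d b ≤ d i := hmono i hi b hbmem hib
  have hdid2 : d i ≤ d 2 := hmono 2 h2mem i hi hi2
  have hdi1 : d i < d 1 := lt_of_le_of_lt hdid2 h12
  have hdb1 : d b < d 1 := lt_of_le_of_lt hdbdi hdi1
  have hDb2 : (2 : ℝ) ≤ (d b : ℝ) := by exact_mod_cast hpos
  have hDbDi : (d b : ℝ) ≤ (d i : ℝ) := by exact_mod_cast hdbdi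
  have hDiD1 : (d i : ℝ) < (d 1 : ℝ) := by exact_mod_cast hdi1
  have hDbD1 : (d b : ℝ) < (d 1 : ℝ) := by exact_mod_cast hdb1
  have hipos : (0 : ℝ) < (i : ℝ) := by
    have : (0:ℕ) < i := by omega
    exact_mod_cast this
  set D1 : ℝ := (d 1 : ℝ) with hD1
  set Di : ℝ := (d i : ℝ) with hDi
  set Db : ℝ := (d b : ℝ) with hDb
  have hDipos : (0 : ℝ) < Di := by linarith
  have hDbpos : (0 : ℝ) < Db := by linarith
  have hD1pos : (0 : ℝ) < D1 := by linarith
  have hne1 : Di ≠ 0 := ne_of_gt hDipos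
  have hne2 : D1 ≠ 0 := ne_of_gt hD1pos
  have hne3 : D1 - Di ≠ 0 := by linarith
  -- log bound : log D1 - log Di > (D1 - Di)/D1
  have hfrac : Di / D1 ≠ 1 := by
    intro h
    have := (div_eq_one_iff_eq hne2).mp h
    linarith
  have hlog1 : Real.log (Di / D1) < Di / D1 - 1 :=
    Real.log_lt_sub_one_of_pos (div_pos hDipos hD1pos) hfrac
  have hlogdiv : Real.log (Di / D1) = Real.log Di - Real.log D1 :=
    Real.log_div hne1 hne2
  have hL : (D1 - Di) / D1 < Real.log D1 - Real.log Di := by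
    rw [hlogdiv] at hlog1
    have heq : Di / D1 - 1 = -((D1 - Di) / D1) := by field_simp; ring
    rw [heq] at hlog1
    linarith
  -- Step 1 : i / L < i * D1 / (D1 - Di)
  have hstep1 : (i : ℝ) / (Real.log D1 - Real.log Di) < (i : ℝ) * D1 / (D1 - Di) := by
    have h0 : 0 < (D1 - Di) / D1 := div_pos (by linarith) hD1pos
    have h1 := div_lt_div_of_pos_left hipos h0 hL
    calc (i : ℝ) / (Real.log D1 - Real.log Di) < (i : ℝ) / ((D1 - Di) / D1) := h1
      _ = (i : ℝ) * D1 / (D1 - Di) := by field_simp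
  -- constant is positive
  have hCpos : 0 < D1 * Db / (D1 - Db) := div_pos (mul_pos hD1pos hDbpos) (by linarith)
  -- rewrite the Hc term
  have hsub : 1 / Di - 1 / D1 = (D1 - Di) / (Di * D1) := by
    field_simp
  have hterm : (i : ℝ) * ((1 / Di - 1 / D1) ^ 2)⁻¹ / Di = (i : ℝ) * D1 ^ 2 * Di / (D1 - Di) ^ 2 := by
    rw [hsub, div_pow, inv_div]
    field_simp
  -- Step 2 : C * (i * D1 / (D1 - Di)) ≤ term Hc at i
  have hstep2 : D1 * Db / (D1 - Db) * ((i : ℝ) * D1 / (D1 - Di)) ≤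
      (i : ℝ) * ((1 / Di - 1 / D1) ^ 2)⁻¹ / Di := by
    rw [hterm, div_mul_div_comm,
      div_le_div_iff₀ (mul_pos (by linarith) (by linarith)) (pow_pos (by linarith) 2)]
    have key : Db * (D1 - Di) ≤ Di * (D1 - Db) := by nlinarith
    have hpos' : (0 : ℝ) ≤ (i : ℝ) * D1 ^ 2 * (D1 - Di) := by
      have : (0:ℝ) < (i : ℝ) * D1 ^ 2 * (D1 - Di) :=
        mul_pos (mul_pos hipos (pow_pos hD1pos 2)) (by linarith)
      linarith
    have h := mul_le_mul_of_nonneg_left key hpos'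
    ring_nf at h ⊢
    linarith [h]
  -- combine
  have hmain : D1 * Db / (D1 - Db) * ((i : ℝ) / (Real.log D1 - Real.log Di)) <
      (i : ℝ) * ((1 / Di - 1 / D1) ^ 2)⁻¹ / Di :=
    lt_of_lt_of_le (mul_lt_mul_of_pos_left hstep1 hCpos) hstep2
  have hHeq : H = (i : ℝ) / (Real.log D1 - Real.log Di) := by rw [hH, hHi]
  have hHcge : (i : ℝ) * ((1 / Di - 1 / D1) ^ 2)⁻¹ / Di ≤ Hc := by
    rw [hHc]
    exact Finset.le_sup' (fun j : ℕ => (j : ℝ) * ((1 / (d j : ℝ) - 1 / D1) ^ 2)⁻¹ / (d j : ℝ)) hi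
  rw [hHeq]
  exact lt_of_lt_of_le hmain hHcge
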